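/- Fix an integer n ≥ 2 and let A be a Banach algebra. Then for all a, b ∈ A the element aⁿ − bⁿ lies in 𝒫ₙ(A) and satisfies ‖aⁿ − bⁿ‖_{𝒫ₙ} ≤ (nⁿ/n!) Σ_{j=1}^{n} C(n, j) ‖b‖^{n−j} ‖a − b‖^{j}, where C(n, j) is the binomial coefficient. In particular, the map a ↦ aⁿ from A to (𝒫ₙ(A), ‖·‖_{𝒫ₙ}) is continuous. -/

import Mathlib

/- Statement 16: In a Banach algebra `A`, for all `a b : A` the element `aⁿ − bⁿ` lies in
`𝒫ₙ(A)` and `‖aⁿ − bⁿ‖_{𝒫ₙ} ≤ (nⁿ/n!) Σ_{j=1}^{n} C(n,j) ‖b‖^{n−j} ‖a−b‖^{j}`; in particular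
`a ↦ aⁿ` is continuous from `A` to `(𝒫ₙ(A), ‖·‖_{𝒫ₙ})`. -/

noncomputable section

/-- `npow1 mul a k = a^(k+1)` (products with respect to the multiplication `mul`). -/
def npow1 {A : Type*} (mul : A → A → A) (a : A) : ℕ → A
  | 0 => a
  | k + 1 => mul a (npow1 mul a k)

/-- `npower mul a n = aⁿ` for `n ≥ 1` (junk value `a` for `n = 0`). -/
def npower {A : Type*} (mul : A → A → A) (a : A) (n : ℕ) : A :=
  npow1 mul a (n - 1)

/-- `𝒫ₙ(A)`: the linear span of the set of n-th powers of elements of `A`. -/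
def PnSubmodule {A : Type*} [AddCommGroup A] [Module ℂ A] (mul : A → A → A) (n : ℕ) :
    Submodule ℂ A :=
  Submodule.span ℂ {x : A | ∃ a : A, x = npower mul a n}

/-- The norm `‖·‖_{𝒫ₙ}` on `𝒫ₙ(A)`. -/
def PnNorm {A : Type*} [NormedAddCommGroup A] (mul : A → A → A) (n : ℕ) (a : A) : ℝ :=
  sInf {r : ℝ | ∃ (m : ℕ) (c : Fin m → A),
    a = ∑ j, npower mul (c j) n ∧ r = ∑ j, ‖c j‖ ^ n}

namespace Stmt16
set_option linter.unusedSectionVars false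
set_option linter.unusedTactic false

/-! ### Real arithmetic helper -/

lemma row_le {X Y : ℝ} (hX : 0 < X) (hY : 0 < Y) {j p : ℕ} (hj : 1 ≤ j) (hp : 1 ≤ p) :
    (X + (j * X) / (p * Y) * Y) ^ (j + p) / ((j * X) / (p * Y)) ^ j
      ≤ (((j + p : ℕ) : ℝ) ^ (j + p) / ((j + p).factorial : ℝ)) *
          (((j + p).choose j : ℝ) * X ^ p * Y ^ j) := by
  have hjR : (0:ℝ) < j := by positivity
  have hpR : (0:ℝ) < p := by exact_mod_cast hp
  have hjR' : (0:ℝ) < (j:ℝ) := by exact_mod_cast hj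
  have h1 : X + (j * X) / (p * Y) * Y = X * ((j:ℝ) + p) / p := by
    field_simp; ring
  have h2 : (X * ((j:ℝ) + p) / p) ^ (j + p) / ((j * X) / (p * Y)) ^ j
      = ((j:ℝ) + p) ^ (j + p) * (X ^ p * Y ^ j) / ((p:ℝ) ^ p * (j:ℝ) ^ j) := by
    rw [div_pow, div_pow, mul_pow, mul_pow, mul_pow]
    simp only [pow_add]
    field_simp
  rw [h1, h2]
  have hcast : (((j + p : ℕ) : ℝ)) = (j:ℝ) + p := by push_cast; ring
  rw [hcast]
  have key : (((j + p).factorial : ℝ)) ≤ ((j + p).choose j : ℝ) * (j:ℝ) ^ j * (p:ℝ) ^ p := by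
    have hnat : (j + p).factorial ≤ (j + p).choose j * j ^ j * p ^ p := by
      calc (j + p).factorial = (j + p).choose j * j.factorial * (j + p - j).factorial :=
            (Nat.choose_mul_factorial_mul_factorial (Nat.le_add_right j p)).symm
        _ = (j + p).choose j * j.factorial * p.factorial := by rw [Nat.add_sub_cancel_left]
        _ ≤ (j + p).choose j * j ^ j * p ^ p := by
            exact Nat.mul_le_mul (Nat.mul_le_mul_left _ (Nat.factorial_le_pow j))
              (Nat.factorial_le_pow p)
    exact_mod_cast hnat
  have hB : (0:ℝ) ≤ ((j:ℝ) + p) ^ (j + p) * (X ^ p * Y ^ j) := by positivity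
  rw [div_mul_eq_mul_div, div_le_div_iff₀ (by positivity) (by positivity)]
  calc ((j:ℝ) + p) ^ (j + p) * (X ^ p * Y ^ j) * ((j + p).factorial : ℝ)
      ≤ ((j:ℝ) + p) ^ (j + p) * (X ^ p * Y ^ j) *
          (((j + p).choose j : ℝ) * (j:ℝ) ^ j * (p:ℝ) ^ p) := by
        exact mul_le_mul_of_nonneg_left key hB
    _ = ((j:ℝ) + p) ^ (j + p) * (((j + p).choose j : ℝ) * X ^ p * Y ^ j) *
          ((p:ℝ) ^ p * (j:ℝ) ^ j) := by ring

variable {A : Type*} [NonUnitalNormedRing A] [NormedSpace ℂ A] [IsScalarTower ℂ A A]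
  [SMulCommClass ℂ A A]

lemma npow1_smul (c : ℂ) (x : A) : ∀ k, npow1 (fun a b : A => a * b) (c • x) k
    = c ^ (k+1) • npow1 (fun a b : A => a * b) x k
  | 0 => by simp [npow1]
  | k+1 => by
    simp only [npow1, npow1_smul c x k, smul_mul_assoc, mul_smul_comm, smul_smul]
    rw [← pow_succ]

lemma npow1_zero : ∀ k, npow1 (fun a b : A => a * b) (0:A) k = 0
  | 0 => rfl
  | k+1 => by simp [npow1, npow1_zero k]

lemma npow1_norm_le (x : A) : ∀ k, ‖npow1 (fun a b : A => a * b) x k‖ ≤ ‖x‖ ^ (k+1)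
  | 0 => by simp [npow1]
  | k+1 => by
    calc ‖x * npow1 (fun a b : A => a * b) x k‖ ≤ ‖x‖ * ‖x‖^(k+1) :=
          le_trans (norm_mul_le _ _) (mul_le_mul_of_nonneg_left (npow1_norm_le x k) (norm_nonneg x))
      _ = ‖x‖ ^ (k+2) := by ring

def Tc (b h : A) : ℕ → ℕ → A
  | 0, 0 => b
  | 0, 1 => h
  | 0, _+2 => 0
  | k+1, 0 => b * Tc b h k 0
  | k+1, j+1 => b * Tc b h k (j+1) + h * Tc b h k j

lemma Tc_zero (b h : A) : ∀ k j, k + 2 ≤ j → Tc b h k j = 0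
  | 0, 0 => by omega
  | 0, 1 => by omega
  | 0, j+2 => fun _ => rfl
  | k+1, 0 => by omega
  | k+1, j+1 => fun hj => by
    have h1 : Tc b h k (j+1) = 0 := Tc_zero b h k (j+1) (by omega)
    have h2 : Tc b h k j = 0 := Tc_zero b h k j (by omega)
    simp [Tc, h1, h2]

lemma Tc_bot (b h : A) : ∀ k, Tc b h k 0 = npow1 (fun a b : A => a * b) b k
  | 0 => rfl
  | k+1 => by simp [Tc, npow1, Tc_bot b h k]

lemma Tc_top (b h : A) : ∀ k, Tc b h k (k+1) = npow1 (fun a b : A => a * b) h k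
  | 0 => rfl
  | k+1 => by
    simp [Tc, npow1, Tc_top b h k, Tc_zero b h k (k+2) le_rfl]

lemma expand (b h : A) (u : ℂ) : ∀ k, npow1 (fun a b : A => a * b) (b + u • h) k
    = ∑ j ∈ Finset.range (k+2), u ^ j • Tc b h k j
  | 0 => by simp [npow1, Tc, Finset.sum_range_succ]
  | k+1 => by
    show (b + u • h) * npow1 (fun a b : A => a * b) (b + u • h) k = _
    rw [expand b h u k, Finset.sum_range_succ' (fun j => u ^ j • Tc b h (k+1) j) (k+2)]
    beta_reduce
    rw [add_mul, Finset.mul_sum, Finset.mul_sum]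
    have e1 : ∀ j, b * (u ^ j • Tc b h k j) = u ^ j • (b * Tc b h k j) :=
      fun j => (mul_smul_comm _ _ _)
    have e2 : ∀ j, (u • h) * (u ^ j • Tc b h k j) = u ^ (j+1) • (h * Tc b h k j) := by
      intro j
      rw [smul_mul_assoc, mul_smul_comm, smul_smul, ← pow_succ']
    simp only [e1, e2]
    have hsplit : ∀ j, u ^ (j+1) • Tc b h (k+1) (j+1)
        = u ^ (j+1) • (b * Tc b h k (j+1)) + u ^ (j+1) • (h * Tc b h k j) := by
      intro j; rw [← smul_add]; rfl
    rw [Finset.sum_congr rfl (fun j _ => hsplit j)]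
    rw [Finset.sum_add_distrib]
    have hbot : (u:ℂ) ^ 0 • Tc b h (k+1) 0 = u ^ 0 • (b * Tc b h k 0) := rfl
    rw [hbot]
    have hz : u ^ ((k+1)+1) • (b * Tc b h k ((k+1)+1)) = 0 := by
      rw [Tc_zero b h k (k+2) le_rfl]; simp
    have hext : ∑ j ∈ Finset.range (k+2), u ^ (j+1) • (b * Tc b h k (j+1))
        + u ^ 0 • (b * Tc b h k 0) = ∑ j ∈ Finset.range (k+2), u ^ j • (b * Tc b h k j) :=
      calc ∑ j ∈ Finset.range (k+2), u ^ (j+1) • (b * Tc b h k (j+1)) + u ^ 0 • (b * Tc b h k 0)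
          = (∑ j ∈ Finset.range (k+1), u ^ (j+1) • (b * Tc b h k (j+1))
              + u ^ ((k+1)+1) • (b * Tc b h k ((k+1)+1))) + u ^ 0 • (b * Tc b h k 0) := by
            rw [Finset.sum_range_succ (fun j => u ^ (j+1) • (b * Tc b h k (j+1))) (k+1)]
        _ = ∑ j ∈ Finset.range (k+1), u ^ (j+1) • (b * Tc b h k (j+1))
              + u ^ 0 • (b * Tc b h k 0) := by rw [hz, add_zero]
        _ = ∑ j ∈ Finset.range (k+2), u ^ j • (b * Tc b h k j) :=
            (Finset.sum_range_succ' (fun j => u ^ j • (b * Tc b h k j)) (k+1)).symm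
    rw [← hext]
    abel


/-- geometric sum filter for `ω = exp(2πi/n)` -/
lemma filter_sum {n : ℕ} (hn : 1 ≤ n) (m : ℕ) :
    ∑ k ∈ Finset.range n, (Complex.exp (2 * Real.pi * Complex.I / n)) ^ (k * m)
      = if n ∣ m then (n : ℂ) else 0 := by
  set ω := Complex.exp (2 * Real.pi * Complex.I / n) with hω
  have hprim : IsPrimitiveRoot ω n := Complex.isPrimitiveRoot_exp n (by omega)
  have hpow : ∀ k, ω ^ (k * m) = (ω ^ m) ^ k := by
    intro k; rw [← pow_mul, Nat.mul_comm]
  simp only [hpow]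
  by_cases hdvd : n ∣ m
  · have h1 : ω ^ m = 1 := (hprim.pow_eq_one_iff_dvd m).2 hdvd
    simp [h1, hdvd]
  · have h1 : ω ^ m ≠ 1 := fun h => hdvd ((hprim.pow_eq_one_iff_dvd m).1 h)
    have h2 : (ω ^ m) ^ n = 1 := by
      rw [← pow_mul, Nat.mul_comm, pow_mul, hprim.pow_eq_one, one_pow]
    rw [geom_sum_eq h1 n, h2]
    simp [hdvd]

lemma norm_omega_pow {n : ℕ} (hn : 1 ≤ n) (m : ℕ) :
    ‖(Complex.exp (2 * Real.pi * Complex.I / n)) ^ m‖ = 1 := by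
  rw [norm_pow]
  have : ‖Complex.exp (2 * Real.pi * Complex.I / n)‖ = 1 := by
    rw [Complex.norm_exp]
    have : (2 * Real.pi * Complex.I / n).re = 0 := by
      simp [Complex.div_re]
    rw [this, Real.exp_zero]
  rw [this, one_pow]


lemma extract (b h : A) {n j : ℕ} (hn : 2 ≤ n) (hj1 : 1 ≤ j) (hjn : j ≤ n - 1) (s : ℂ) :
    ∑ k ∈ Finset.range n, ((Complex.exp (2 * Real.pi * Complex.I / n)) ^ (k * (n - j)))
        • npower (fun a b : A => a * b)
            (b + (s * (Complex.exp (2 * Real.pi * Complex.I / n)) ^ k) • h) n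
      = ((n : ℂ) * s ^ j) • Tc b h (n-1) j := by
  set ω := Complex.exp (2 * Real.pi * Complex.I / n) with hω
  have hrange : (n - 1) + 2 = n + 1 := by omega
  calc ∑ k ∈ Finset.range n, (ω ^ (k * (n - j)))
        • npower (fun a b : A => a * b) (b + (s * ω ^ k) • h) n
      = ∑ k ∈ Finset.range n, ω ^ (k * (n - j))
          • ∑ i ∈ Finset.range (n+1), (s * ω ^ k) ^ i • Tc b h (n-1) i := by
        refine Finset.sum_congr rfl fun k _ => ?_
        show ω ^ (k * (n - j)) • npow1 (fun a b : A => a * b) (b + (s * ω ^ k) • h) (n-1) = _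
        rw [expand b h (s * ω ^ k) (n-1), hrange]
    _ = ∑ i ∈ Finset.range (n+1), ∑ k ∈ Finset.range n,
          (s ^ i * ω ^ (k * (n - j + i))) • Tc b h (n-1) i := by
        simp only [Finset.smul_sum]
        rw [Finset.sum_comm]
        refine Finset.sum_congr rfl fun i _ => Finset.sum_congr rfl fun k _ => ?_
        rw [smul_smul]
        congr 1
        rw [mul_pow, ← pow_mul, Nat.mul_add, pow_add]
        ring
    _ = ∑ i ∈ Finset.range (n+1),
          (s ^ i * ∑ k ∈ Finset.range n, ω ^ (k * (n - j + i))) • Tc b h (n-1) i := by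
        refine Finset.sum_congr rfl fun i _ => ?_
        rw [Finset.mul_sum, Finset.sum_smul]
    _ = ((n : ℂ) * s ^ j) • Tc b h (n-1) j := by
        rw [Finset.sum_eq_single_of_mem j (Finset.mem_range.2 (by omega))]
        · have hd : n ∣ (n - j + j) := by
            have hjj : n - j + j = n := by omega
            rw [hjj]
          rw [filter_sum (by omega), if_pos hd, mul_comm]
        · intro i hi hne
          rw [filter_sum (by omega), if_neg, mul_zero, zero_smul]
          rintro ⟨c, hc⟩
          have hi' : i < n + 1 := Finset.mem_range.1 hi
          rcases c with _ | _ | c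
          · omega
          · omega
          · have : n * (c + 1 + 1) = n * c + n + n := by ring
            omega

lemma npower_smul (c : ℂ) (x : A) {n : ℕ} (hn : 1 ≤ n) :
    npower (fun a b : A => a * b) (c • x) n = c ^ n • npower (fun a b : A => a * b) x n := by
  unfold npower
  rw [npow1_smul, Nat.sub_add_cancel hn]

lemma rep {ι : Type*} (t : Finset ι) (c : ι → ℂ) (x : ι → A) {n : ℕ} (hn : 1 ≤ n) (z : A)
    (hz : z = ∑ i ∈ t, c i • npower (fun a b : A => a * b) (x i) n) :
    z ∈ PnSubmodule (fun a b : A => a * b) n ∧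
    PnNorm (fun a b : A => a * b) n z ≤ ∑ i ∈ t, ‖c i‖ * ‖x i‖ ^ n := by
  have hn0 : 0 < n := hn
  have hd : ∀ i, ∃ d : ℂ, d ^ n = c i := fun i => IsAlgClosed.exists_pow_nat_eq (c i) hn0
  choose d hd using hd
  set y : ι → A := fun i => d i • x i with hy
  have hyp : ∀ i, npower (fun a b : A => a * b) (y i) n
      = c i • npower (fun a b : A => a * b) (x i) n := by
    intro i
    rw [hy]
    simp only
    rw [npower_smul (d i) (x i) hn, hd i]
  have hz' : z = ∑ i ∈ t, npower (fun a b : A => a * b) (y i) n := by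
    rw [hz]; exact (Finset.sum_congr rfl fun i _ => (hyp i)).symm
  have hnormy : ∀ i, ‖y i‖ ^ n = ‖c i‖ * ‖x i‖ ^ n := by
    intro i
    rw [hy]
    simp only [norm_smul, mul_pow, ← norm_pow, hd i]
  constructor
  · rw [hz']
    exact Submodule.sum_mem _ fun i _ => Submodule.subset_span ⟨y i, rfl⟩
  · have hbdd : BddBelow {r : ℝ | ∃ (m : ℕ) (cc : Fin m → A),
        z = ∑ j, npower (fun a b : A => a * b) (cc j) n ∧ r = ∑ j, ‖cc j‖ ^ n} := by
      refine ⟨0, fun r hr => ?_⟩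
      obtain ⟨m, cc, -, rfl⟩ := hr
      exact Finset.sum_nonneg fun j _ => pow_nonneg (norm_nonneg _) n
    have hmem : (∑ i ∈ t, ‖y i‖ ^ n) ∈ {r : ℝ | ∃ (m : ℕ) (cc : Fin m → A),
        z = ∑ j, npower (fun a b : A => a * b) (cc j) n ∧ r = ∑ j, ‖cc j‖ ^ n} := by
      refine ⟨t.card, fun j => y (t.equivFin.symm j), ?_, ?_⟩
      · rw [hz', ← Finset.sum_coe_sort t (fun i => npower (fun a b : A => a * b) (y i) n)]
        exact (Equiv.sum_comp t.equivFin.symm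
          (fun i : t => npower (fun a b : A => a * b) (y i) n)).symm
      · rw [← Finset.sum_coe_sort t (fun i => ‖y i‖ ^ n)]
        exact (Equiv.sum_comp t.equivFin.symm (fun i : t => ‖y i‖ ^ n)).symm
    calc PnNorm (fun a b : A => a * b) n z ≤ ∑ i ∈ t, ‖y i‖ ^ n := csInf_le hbdd hmem
      _ = ∑ i ∈ t, ‖c i‖ * ‖x i‖ ^ n := Finset.sum_congr rfl fun i _ => hnormy i



lemma part1 {n : ℕ} (hn : 2 ≤ n) (a b : A) :
    npower (fun a b : A => a * b) a n - npower (fun a b : A => a * b) b n ∈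
        PnSubmodule (fun a b : A => a * b) n ∧
      PnNorm (fun a b : A => a * b) n
          (npower (fun a b : A => a * b) a n - npower (fun a b : A => a * b) b n) ≤
        ((n : ℝ) ^ n / (n.factorial : ℝ)) *
          ∑ j ∈ Finset.Icc 1 n, (n.choose j : ℝ) * ‖b‖ ^ (n - j) * ‖a - b‖ ^ j := by
  have hn1 : 1 ≤ n := by omega
  have hK : (0:ℝ) < (n:ℝ) ^ n / (n.factorial : ℝ) := by positivity
  have hK1 : (1:ℝ) ≤ (n:ℝ) ^ n / (n.factorial : ℝ) := by
    rw [le_div_iff₀ (by positivity)]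
    rw [one_mul]
    exact_mod_cast Nat.factorial_le_pow n
  have hRHS0 : (0:ℝ) ≤ ((n : ℝ) ^ n / (n.factorial : ℝ)) *
      ∑ j ∈ Finset.Icc 1 n, (n.choose j : ℝ) * ‖b‖ ^ (n - j) * ‖a - b‖ ^ j := by
    refine mul_nonneg hK.le (Finset.sum_nonneg fun j _ => by positivity)
  by_cases hab : a = b
  · subst hab
    obtain ⟨hm, hb⟩ := rep (∅ : Finset ℕ) (fun _ => 0) (fun _ => 0) hn1
      (npower (fun a b : A => a * b) a n - npower (fun a b : A => a * b) a n) (by simp)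
    exact ⟨hm, le_trans hb (by simpa using hRHS0)⟩
  by_cases hb0 : b = 0
  · subst hb0
    have hzb : npower (fun a b : A => a * b) (0:A) n = 0 := npow1_zero (n-1)
    obtain ⟨hm, hb⟩ := rep ({0} : Finset ℕ) (fun _ => 1) (fun _ => a) hn1
      (npower (fun a b : A => a * b) a n - npower (fun a b : A => a * b) (0:A) n)
      (by rw [hzb, sub_zero, Finset.sum_singleton, one_smul])
    refine ⟨hm, le_trans hb ?_⟩
    rw [Finset.sum_singleton]
    have hsum : ∑ j ∈ Finset.Icc 1 n, (n.choose j : ℝ) * ‖(0:A)‖ ^ (n - j) * ‖a - 0‖ ^ j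
        = ‖a‖ ^ n := by
      rw [Finset.sum_eq_single_of_mem n (Finset.mem_Icc.2 ⟨hn1, le_rfl⟩)]
      · simp
      · intro j hj hne
        have hj' := Finset.mem_Icc.1 hj
        rw [norm_zero, zero_pow (by omega : n - j ≠ 0)]
        ring
    rw [hsum, norm_one, one_mul]
    exact le_mul_of_one_le_left (by positivity) hK1
  -- main case
  have hhne : a - b ≠ 0 := sub_ne_zero.2 hab
  set h : A := a - b with hh
  set X : ℝ := ‖b‖ with hXd
  set Y : ℝ := ‖h‖ with hYd
  have hX : 0 < X := norm_pos_iff.2 hb0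
  have hY : 0 < Y := norm_pos_iff.2 hhne
  set ω : ℂ := Complex.exp (2 * Real.pi * Complex.I / n) with hω
  set sr : ℕ → ℝ := fun j => ((j:ℝ) * X) / (((n - j : ℕ):ℝ) * Y) with hsr
  have hsrpos : ∀ j, 1 ≤ j → j ≤ n - 1 → 0 < sr j := by
    intro j hj1 hj2
    have h1 : (0:ℝ) < ((j:ℕ):ℝ) := by exact_mod_cast hj1
    have h2 : (0:ℝ) < ((n - j:ℕ):ℝ) := by
      have : 1 ≤ n - j := by omega
      exact_mod_cast this
    exact div_pos (mul_pos h1 hX) (mul_pos h2 hY)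
  set D : ℕ → ℂ := fun j => (n : ℂ) * ((sr j : ℝ) : ℂ) ^ j with hD
  have hDnorm : ∀ j, 1 ≤ j → j ≤ n - 1 → ‖D j‖ = (n:ℝ) * sr j ^ j := by
    intro j hj1 hj2
    rw [hD]
    simp only
    rw [norm_mul, norm_pow, Complex.norm_natCast, Complex.norm_real,
      Real.norm_of_nonneg (hsrpos j hj1 hj2).le]
  have hDne : ∀ j, 1 ≤ j → j ≤ n - 1 → D j ≠ 0 := by
    intro j hj1 hj2
    have hnR : (0:ℝ) < (n:ℝ) := by exact_mod_cast hn1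
    have : ‖D j‖ ≠ 0 := by
      rw [hDnorm j hj1 hj2]
      exact (mul_pos hnR (pow_pos (hsrpos j hj1 hj2) j)).ne'
    exact fun hc => this (by rw [hc, norm_zero])
  set t : Finset (ℕ × ℕ) := insert (n-1, n) ((Finset.range (n-1)) ×ˢ Finset.range n) with ht
  have hnotin : ((n-1, n) : ℕ × ℕ) ∉ (Finset.range (n-1)) ×ˢ Finset.range n := by
    simp [Finset.mem_product]
  set c : ℕ × ℕ → ℂ := fun p => if p.2 = n then 1 else ω ^ (p.2 * (n - (p.1+1))) / D (p.1+1)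
    with hc
  set x : ℕ × ℕ → A := fun p => if p.2 = n then h
    else b + (((sr (p.1+1) : ℝ):ℂ) * ω ^ p.2) • h with hx
  have hTsum : ∀ i ∈ Finset.range (n-1), ∑ k ∈ Finset.range n,
      c (i,k) • npower (fun a b : A => a * b) (x (i,k)) n = Tc b h (n-1) (i+1) := by
    intro i hi
    have hi' : i < n - 1 := Finset.mem_range.1 hi
    have h1 : ∀ k ∈ Finset.range n, c (i,k) • npower (fun a b : A => a * b) (x (i,k)) n
        = (D (i+1))⁻¹ • ((ω ^ (k * (n - (i+1)))) • npower (fun a b : A => a * b)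
            (b + (((sr (i+1):ℝ):ℂ) * ω ^ k) • h) n) := by
      intro k hk
      have hkn : k ≠ n := by have := Finset.mem_range.1 hk; omega
      simp only [hc, hx, if_neg hkn]
      rw [smul_smul]
      congr 1
      rw [div_eq_mul_inv, mul_comm]
    rw [Finset.sum_congr rfl h1, ← Finset.smul_sum,
      extract b h (j := i+1) hn (by omega) (by omega) (((sr (i+1):ℝ):ℂ)), smul_smul,
      show ((n:ℂ) * ((sr (i+1):ℝ):ℂ) ^ (i+1)) = D (i+1) from rfl,
      inv_mul_cancel₀ (hDne (i+1) (by omega) (by omega)), one_smul]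
  have hRHSsum : ∑ p ∈ t, c p • npower (fun a b : A => a * b) (x p) n
      = npower (fun a b : A => a * b) h n + ∑ i ∈ Finset.range (n-1), Tc b h (n-1) (i+1) := by
    rw [ht, Finset.sum_insert hnotin, Finset.sum_product]
    congr 1
    · simp [hc, hx]
    · exact Finset.sum_congr rfl hTsum
  have hba : b + h = a := by rw [hh]; abel
  have hLa : npower (fun a b : A => a * b) a n = ∑ i ∈ Finset.range (n+1), Tc b h (n-1) i := by
    have e1 : npower (fun a b : A => a * b) a n
        = npow1 (fun a b : A => a * b) (b + (1:ℂ) • h) (n-1) := by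
      rw [one_smul, hba]; rfl
    rw [e1, expand b h 1 (n-1), show n - 1 + 2 = n + 1 by omega]
    exact Finset.sum_congr rfl fun i _ => by rw [one_pow, one_smul]
  have hLb : npower (fun a b : A => a * b) b n = Tc b h (n-1) 0 := (Tc_bot b h (n-1)).symm
  have hzeq : npower (fun a b : A => a * b) a n - npower (fun a b : A => a * b) b n
      = ∑ p ∈ t, c p • npower (fun a b : A => a * b) (x p) n := by
    rw [hRHSsum, hLa, hLb, Finset.sum_range_succ' (fun i => Tc b h (n-1) i) n,
      add_sub_cancel_right]
    have hsplit : ∑ i ∈ Finset.range n, Tc b h (n-1) (i+1)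
        = ∑ i ∈ Finset.range (n-1), Tc b h (n-1) (i+1) + Tc b h (n-1) ((n-1)+1) := by
      rw [show Finset.range n = Finset.range ((n-1)+1) by rw [show (n-1)+1 = n by omega],
        Finset.sum_range_succ]
    rw [hsplit, Tc_top b h (n-1), add_comm]
    rfl
  obtain ⟨hmem, hbnd⟩ := rep t c x hn1 _ hzeq
  refine ⟨hmem, le_trans hbnd ?_⟩
  set R : ℕ → ℝ := fun j => ((n:ℝ) ^ n / (n.factorial : ℝ)) *
    ((n.choose j : ℝ) * X ^ (n-j) * Y ^ j) with hR
  have hrow : ∀ i ∈ Finset.range (n-1),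
      ∑ k ∈ Finset.range n, ‖c (i,k)‖ * ‖x (i,k)‖ ^ n ≤ R (i+1) := by
    intro i hi
    have hi' : i < n - 1 := Finset.mem_range.1 hi
    have hj1 : 1 ≤ i + 1 := Nat.le_add_left 1 i
    have hjn : i + 1 ≤ n - 1 := by omega
    have hsp := hsrpos (i+1) hj1 hjn
    have hnR : (0:ℝ) < (n:ℝ) := by exact_mod_cast hn1
    have hterm : ∀ k ∈ Finset.range n, ‖c (i,k)‖ * ‖x (i,k)‖ ^ n
        ≤ (1 / ((n:ℝ) * sr (i+1) ^ (i+1))) * (X + sr (i+1) * Y) ^ n := by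
      intro k hk
      have hkn : k ≠ n := by have := Finset.mem_range.1 hk; omega
      have hnc : ‖c (i,k)‖ = 1 / ((n:ℝ) * sr (i+1) ^ (i+1)) := by
        simp only [hc, if_neg hkn]
        rw [norm_div, hω, norm_omega_pow hn1, hDnorm (i+1) hj1 hjn]
      have hnx : ‖x (i,k)‖ ≤ X + sr (i+1) * Y := by
        simp only [hx, if_neg hkn]
        refine le_trans (norm_add_le _ _) ?_
        rw [norm_smul, norm_mul, hω, norm_omega_pow hn1, mul_one, Complex.norm_real,
          Real.norm_of_nonneg hsp.le]
      rw [hnc]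
      exact mul_le_mul_of_nonneg_left
        (pow_le_pow_left₀ (norm_nonneg _) hnx n) (by positivity)
    have hconst : ∑ k ∈ Finset.range n,
        ((1 / ((n:ℝ) * sr (i+1) ^ (i+1))) * (X + sr (i+1) * Y) ^ n)
        = (X + sr (i+1) * Y) ^ n / sr (i+1) ^ (i+1) := by
      rw [Finset.sum_const, Finset.card_range, nsmul_eq_mul]
      field_simp
    refine le_trans (Finset.sum_le_sum hterm) (le_trans (le_of_eq hconst) ?_)
    have hp1 : 1 ≤ n - (i + 1) := by omega
    have hjp : (i + 1) + (n - (i + 1)) = n := by omega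
    have hrl := row_le hX hY hj1 hp1 (p := n - (i+1))
    rw [hjp] at hrl
    have hsrj : sr (i+1) = ((i+1 : ℕ):ℝ) * X / ((((n - (i+1) : ℕ)) : ℝ) * Y) := rfl
    rw [hsrj]
    exact hrl
  have hfirstnorm : ‖c (n-1,n)‖ * ‖x (n-1,n)‖ ^ n = Y ^ n := by
    simp [hc, hx]
    rfl
  have hYn : Y ^ n ≤ R n := by
    rw [hR]
    simp only [Nat.choose_self, Nat.cast_one, Nat.sub_self, pow_zero, one_mul, mul_one]
    exact le_mul_of_one_le_left (by positivity) hK1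
  calc ∑ p ∈ t, ‖c p‖ * ‖x p‖ ^ n
      = ‖c (n-1,n)‖ * ‖x (n-1,n)‖ ^ n
        + ∑ i ∈ Finset.range (n-1), ∑ k ∈ Finset.range n, ‖c (i,k)‖ * ‖x (i,k)‖ ^ n := by
        rw [ht, Finset.sum_insert hnotin, Finset.sum_product]
    _ ≤ R n + ∑ i ∈ Finset.range (n-1), R (i+1) := by
        rw [hfirstnorm]
        exact add_le_add hYn (Finset.sum_le_sum hrow)
    _ = ∑ j ∈ Finset.Icc 1 n, R j := by
        rw [← Finset.Ico_add_one_right_eq_Icc, Finset.sum_Ico_eq_sum_range, show n + 1 - 1 = n by omega]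
        have hstep : ∑ i ∈ Finset.range n, R (1+i)
            = ∑ i ∈ Finset.range (n-1), R (1+i) + R (1+(n-1)) := by
          rw [show Finset.range n = Finset.range ((n-1)+1) by rw [show (n-1)+1 = n by omega],
            Finset.sum_range_succ]
        rw [hstep, show 1 + (n-1) = n by omega, add_comm]
        congr 1
        exact Finset.sum_congr rfl fun i _ => by rw [Nat.add_comm]
    _ = ((n : ℝ) ^ n / (n.factorial : ℝ)) *
          ∑ j ∈ Finset.Icc 1 n, (n.choose j : ℝ) * X ^ (n - j) * Y ^ j := by
        rw [Finset.mul_sum]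


end Stmt16

theorem statement16 (n : ℕ) (hn : 2 ≤ n)
    (A : Type*) [NonUnitalNormedRing A] [NormedSpace ℂ A] [IsScalarTower ℂ A A]
    [SMulCommClass ℂ A A] [CompleteSpace A] :
    (∀ a b : A,
      npower (fun a b : A => a * b) a n - npower (fun a b : A => a * b) b n ∈
        PnSubmodule (fun a b : A => a * b) n ∧
      PnNorm (fun a b : A => a * b) n
          (npower (fun a b : A => a * b) a n - npower (fun a b : A => a * b) b n) ≤
        ((n : ℝ) ^ n / (n.factorial : ℝ)) *
          ∑ j ∈ Finset.Icc 1 n, (n.choose j : ℝ) * ‖b‖ ^ (n - j) * ‖a - b‖ ^ j) ∧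
    -- in particular, `a ↦ aⁿ` is continuous from `A` to `(𝒫ₙ(A), ‖·‖_{𝒫ₙ})`:
    (∀ a : A, ∀ ε : ℝ, 0 < ε → ∃ δ : ℝ, 0 < δ ∧ ∀ b : A, ‖b - a‖ < δ →
      PnNorm (fun a b : A => a * b) n
        (npower (fun a b : A => a * b) b n - npower (fun a b : A => a * b) a n) < ε) := by
  refine ⟨fun a b => Stmt16.part1 hn a b, fun a ε hε => ?_⟩
  set K : ℝ := ((n : ℝ) ^ n / (n.factorial : ℝ)) *
    ∑ j ∈ Finset.Icc 1 n, (n.choose j : ℝ) * (‖a‖ + 1) ^ n with hK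
  have hKpos : 0 < K := by
    apply mul_pos (by positivity)
    apply Finset.sum_pos ?_ (Finset.nonempty_Icc.2 (by omega))
    intro j hj
    have hcj : 0 < n.choose j := Nat.choose_pos (Finset.mem_Icc.1 hj).2
    have hcj2 : (0:ℝ) < (n.choose j : ℝ) := by exact_mod_cast hcj
    positivity
  refine ⟨min 1 (ε / (2 * K)), lt_min one_pos (by positivity), fun b hb => ?_⟩
  obtain ⟨-, hbound⟩ := Stmt16.part1 hn b a
  have hba : ‖b - a‖ ≤ min 1 (ε / (2 * K)) := hb.le
  have h1 : ‖b - a‖ ≤ 1 := le_trans hba (min_le_left _ _)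
  have h2 : ‖b - a‖ ≤ ε / (2 * K) := le_trans hba (min_le_right _ _)
  have hterm : ∀ j ∈ Finset.Icc 1 n, (n.choose j : ℝ) * ‖a‖ ^ (n - j) * ‖b - a‖ ^ j
      ≤ ((n.choose j : ℝ) * (‖a‖ + 1) ^ n) * ‖b - a‖ := by
    intro j hj
    obtain ⟨hj1, hj2⟩ := Finset.mem_Icc.1 hj
    have e1 : ‖a‖ ^ (n - j) ≤ (‖a‖ + 1) ^ n := by
      refine le_trans (pow_le_pow_left₀ (norm_nonneg a)
        (by linarith : ‖a‖ ≤ ‖a‖ + 1) (n-j)) ?_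
      exact pow_le_pow_right₀ (by linarith [norm_nonneg a]) (Nat.sub_le n j)
    have e2 : ‖b - a‖ ^ j ≤ ‖b - a‖ :=
      pow_le_of_le_one (norm_nonneg _) h1 (by omega)
    have e3 : (0:ℝ) ≤ (n.choose j : ℝ) := by positivity
    exact mul_le_mul (mul_le_mul_of_nonneg_left e1 e3) e2 (by positivity) (by positivity)
  have step1 : PnNorm (fun a b : A => a * b) n
      (npower (fun a b : A => a * b) b n - npower (fun a b : A => a * b) a n)
      ≤ K * ‖b - a‖ := by
    refine le_trans hbound ?_
    calc ((n : ℝ) ^ n / (n.factorial : ℝ)) *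
          ∑ j ∈ Finset.Icc 1 n, (n.choose j : ℝ) * ‖a‖ ^ (n - j) * ‖b - a‖ ^ j
        ≤ ((n : ℝ) ^ n / (n.factorial : ℝ)) *
          ∑ j ∈ Finset.Icc 1 n, ((n.choose j : ℝ) * (‖a‖ + 1) ^ n) * ‖b - a‖ :=
          mul_le_mul_of_nonneg_left (Finset.sum_le_sum hterm) (by positivity)
      _ = K * ‖b - a‖ := by rw [← Finset.sum_mul, hK]; ring
  have step2 : K * ‖b - a‖ ≤ ε / 2 := by
    calc K * ‖b - a‖ ≤ K * (ε / (2 * K)) := mul_le_mul_of_nonneg_left h2 hKpos.le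
      _ = ε / 2 := by field_simp
  linarith


end
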